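/- arXiv:1610.05855 — 4 statements merged into one kernel-verified Lean document; each statement's English description precedes it below -/
import Mathlib

section
/- Let k > 0, ℓ ∈ ℝ, θ ∈ (−π/2, π/2), and let 𝕊¹₊ := {x̂ = (x̂₁, x̂₂) ∈ ℝ² : |x̂| = 1, x̂₂ > 0}. Let uˢ, uˢ_ℓ : ℝ² → ℂ and u^∞, u^∞_ℓ : 𝕊¹₊ → ℂ satisfy: (i) uˢ_ℓ(x + (ℓ, 0)) = e^{ikℓ sin θ} uˢ(x) for all x ∈ ℝ² with x₂ > 0; (ii) there exist constants C > 0 and R > 0 such that for all x ∈ ℝ² with x₂ > 0 and |x| ≥ R, |√|x| e^{−ik|x|} uˢ(x) − u^∞(x/|x|)| ≤ C/|x| and |√|x| e^{−ik|x|} uˢ_ℓ(x) − u^∞_ℓ(x/|x|)| ≤ C/|x|; (iii) u^∞ is continuous on 𝕊¹₊. Then u^∞_ℓ(x̂) = e^{ikℓ(sin θ − x̂₁)} u^∞(x̂) for all x̂ ∈ 𝕊¹₊. In particular |u^∞_ℓ(x̂)| = |u^∞(x̂)| for all x̂ ∈ 𝕊¹₊. -/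
open Complex

/-- The vector `(ℓ, 0) ∈ ℝ²`. -/
def shiftVec (ℓ : ℝ) : EuclideanSpace ℝ (Fin 2) := !₂[ℓ, 0]

/-- The open upper half of the unit circle in `ℝ²`. -/
def upperHalfCircle : Set (EuclideanSpace ℝ (Fin 2)) :=
  {x | ‖x‖ = 1 ∧ x 1 > 0}

open Filter Topology in
private lemma tendsto_of_norm_bound {E : Type*} [NormedAddCommGroup E] {f : ℝ → E} {L : E}
    {g : ℝ → ℝ} (hg : Tendsto g atTop (nhds 0)) (h : ∀ᶠ t in atTop, ‖f t - L‖ ≤ g t) :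
    Tendsto f atTop (nhds L) := by
  rw [tendsto_iff_norm_sub_tendsto_zero]
  exact squeeze_zero' (.of_forall fun t => norm_nonneg _) h hg

set_option maxHeartbeats 1000000 in
/-- Translation formula for far-field patterns: if `uˢ_ℓ(x + (ℓ,0)) = e^{ikℓ sin θ} uˢ(x)`
on the upper half plane, and `u^∞`, `u^∞_ℓ` are the far-field patterns of `uˢ`, `uˢ_ℓ`
(with uniform `O(1/|x|)` remainder), and `u^∞` is continuous on the open upper half circle,
then `u^∞_ℓ(x̂) = e^{ikℓ(sin θ - x̂₁)} u^∞(x̂)` and in particular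
`|u^∞_ℓ(x̂)| = |u^∞(x̂)|` for all `x̂` in the open upper half circle. -/
theorem farfield_translation_formula (k ℓ θ : ℝ) (hk : 0 < k)
    (hθ : θ ∈ Set.Ioo (-(Real.pi / 2)) (Real.pi / 2))
    (us usl : EuclideanSpace ℝ (Fin 2) → ℂ)
    (uInf uInfl : EuclideanSpace ℝ (Fin 2) → ℂ)
    (htrans : ∀ x : EuclideanSpace ℝ (Fin 2), x 1 > 0 →
      usl (x + shiftVec ℓ) =
        Complex.exp (I * k * ℓ * Real.sin θ) * us x)
    (hfar : ∃ C > (0 : ℝ), ∃ R > (0 : ℝ), ∀ x : EuclideanSpace ℝ (Fin 2), x 1 > 0 → ‖x‖ ≥ R →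
      ‖(Real.sqrt ‖x‖ : ℂ) * Complex.exp (-(I * k * ‖x‖)) * us x -
          uInf (‖x‖⁻¹ • x)‖ ≤ C / ‖x‖ ∧
      ‖(Real.sqrt ‖x‖ : ℂ) * Complex.exp (-(I * k * ‖x‖)) * usl x -
          uInfl (‖x‖⁻¹ • x)‖ ≤ C / ‖x‖)
    (hcont : ContinuousOn uInf upperHalfCircle) :
    ∀ xhat ∈ upperHalfCircle,
      uInfl xhat = Complex.exp (I * k * ℓ * (Real.sin θ - xhat 0)) * uInf xhat ∧
      ‖uInfl xhat‖ = ‖uInf xhat‖ := by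
  obtain ⟨C, hC, R, hR, hfar⟩ := hfar
  intro xhat hxhat
  obtain ⟨hnorm, hpos⟩ := hxhat
  open Filter Topology in
  have key : uInfl xhat = Complex.exp (I * k * ℓ * (Real.sin θ - xhat 0)) * uInf xhat := by
    -- the ray point with shift removed
    set y : ℝ → EuclideanSpace ℝ (Fin 2) := fun t => t • xhat - shiftVec ℓ with hy
    set n : ℝ → ℝ := fun t => ‖y t‖ with hn
    have hnyt : ∀ t : ℝ, n t = ‖y t‖ := fun _ => rfl
    have hshiftnorm : ‖shiftVec ℓ‖ = |ℓ| := by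
      rw [EuclideanSpace.norm_eq]
      simp [Fin.sum_univ_two, shiftVec, Real.sqrt_sq_eq_abs]
    have hsmulnorm : ∀ t : ℝ, 0 ≤ t → ‖t • xhat‖ = t := by
      intro t ht
      rw [norm_smul, hnorm, mul_one, Real.norm_of_nonneg ht]
    have hy1 : ∀ t : ℝ, y t 1 = t * xhat 1 := by
      intro t; simp [hy, shiftVec]
    have hy0 : ∀ t : ℝ, y t 0 = t * xhat 0 - ℓ := by
      intro t; simp [hy, shiftVec]
    have hsq : (xhat 0) ^ 2 + (xhat 1) ^ 2 = 1 := by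
      have h1 : Real.sqrt (∑ i, ‖xhat i‖ ^ 2) = 1 := by
        rw [← EuclideanSpace.norm_eq]; exact hnorm
      have h2 : (∑ i, ‖xhat i‖ ^ 2) = 1 := by
        nlinarith [Real.sq_sqrt (show (0:ℝ) ≤ ∑ i, ‖xhat i‖ ^ 2 from
          Finset.sum_nonneg fun i _ => sq_nonneg _)]
      simpa [Fin.sum_univ_two, _root_.sq_abs] using h2
    have hnsq : ∀ t : ℝ, (n t) ^ 2 = t ^ 2 - 2 * t * ℓ * xhat 0 + ℓ ^ 2 := by
      intro t
      have h1 : n t = Real.sqrt (‖y t 0‖ ^ 2 + ‖y t 1‖ ^ 2) := by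
        rw [hnyt]; simp only [EuclideanSpace.norm_eq, Fin.sum_univ_two]
      rw [h1, Real.sq_sqrt (by positivity), hy0, hy1, Real.norm_eq_abs, Real.norm_eq_abs,
        _root_.sq_abs, _root_.sq_abs]
      nlinarith [hsq]
    have hnlow : ∀ t : ℝ, 0 ≤ t → t - |ℓ| ≤ n t := by
      intro t ht
      have h := norm_sub_norm_le (t • xhat) (shiftVec ℓ)
      rw [hsmulnorm t ht, hshiftnorm] at h
      exact h
    have hnpos : ∀ t : ℝ, |ℓ| + 1 ≤ t → 0 < n t := by
      intro t ht
      have h1 : (0:ℝ) ≤ t := le_trans (by positivity) ht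
      have := hnlow t h1
      linarith
    have hnhigh : ∀ t : ℝ, 0 ≤ t → n t ≤ t + |ℓ| := by
      intro t ht
      have h := norm_sub_le (t • xhat) (shiftVec ℓ)
      rw [hsmulnorm t ht, hshiftnorm] at h
      exact h
    have hn_top : Tendsto n atTop atTop := by
      apply tendsto_atTop_mono' atTop
        (eventually_atTop.2 ⟨0, fun t ht => hnlow t ht⟩)
      exact tendsto_atTop_add_const_right _ (-|ℓ|) tendsto_id
    -- n t / t → 1
    have hratio : Tendsto (fun t => n t / t) atTop (nhds 1) := by
      apply tendsto_of_norm_bound (g := fun t => |ℓ| / t)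
        (tendsto_const_nhds.div_atTop tendsto_id)
      filter_upwards [eventually_ge_atTop (|ℓ| + 1)] with t ht
      have ht0 : (0:ℝ) < t := lt_of_lt_of_le (by positivity) ht
      have h1 := hnlow t ht0.le
      have h2 := hnhigh t ht0.le
      have h3 : n t / t - 1 = (n t - t) / t := by field_simp
      have habs : |n t - t| ≤ |ℓ| := abs_le.2 ⟨by linarith, by linarith⟩
      rw [Real.norm_eq_abs, h3, abs_div, abs_of_pos ht0]
      exact (div_le_div_iff_of_pos_right ht0).2 habs
    have hratio' : Tendsto (fun t => t / n t) atTop (nhds 1) := by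
      have h := hratio.inv₀ one_ne_zero
      rw [inv_one] at h
      apply h.congr
      intro t
      rw [inv_div]
    -- n t - t → -(ℓ * xhat 0)
    have hdiff : Tendsto (fun t => n t - t) atTop (nhds (-(ℓ * xhat 0))) := by
      have heq : ∀ᶠ t in atTop, (ℓ ^ 2 / t - 2 * ℓ * xhat 0) / (n t / t + 1) = n t - t := by
        filter_upwards [eventually_ge_atTop (|ℓ| + 1)] with t ht
        have ht0 : (0:ℝ) < t := lt_of_lt_of_le (by positivity) ht
        have hnt := hnpos t ht
        have hsum : 0 < n t + t := by linarith
        have hns := hnsq t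
        rw [div_eq_iff (by positivity)]
        field_simp
        nlinarith [hns]
      have hlim : Tendsto (fun t => (ℓ ^ 2 / t - 2 * ℓ * xhat 0) / (n t / t + 1)) atTop
          (nhds (-(ℓ * xhat 0))) := by
        have hnum : Tendsto (fun t => ℓ ^ 2 / t - 2 * ℓ * xhat 0) atTop
            (nhds (0 - 2 * ℓ * xhat 0)) :=
          (tendsto_const_nhds.div_atTop tendsto_id).sub tendsto_const_nhds
        have hden : Tendsto (fun t => n t / t + 1) atTop (nhds (1 + 1)) :=
          hratio.add tendsto_const_nhds
        have h := hnum.div hden (by norm_num)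
        rw [show (0 - 2 * ℓ * xhat 0) / (1 + 1) = -(ℓ * xhat 0) by ring] at h
        exact h
      exact Tendsto.congr' heq hlim
    -- sqrt ratio → 1
    have hsqrt : Tendsto (fun t => Real.sqrt t / Real.sqrt (n t)) atTop (nhds 1) := by
      have h1 : Tendsto (fun t => Real.sqrt (t / n t)) atTop (nhds 1) := by
        have h := (Real.continuous_sqrt.tendsto 1).comp hratio'
        simpa [Function.comp_def] using h
      apply h1.congr' ?_
      filter_upwards [eventually_ge_atTop (|ℓ| + 1)] with t ht
      have ht0 : (0:ℝ) < t := lt_of_lt_of_le (by positivity) ht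
      rw [Real.sqrt_div ht0.le]
    -- direction d t tends to xhat within the upper half circle
    set d : ℝ → EuclideanSpace ℝ (Fin 2) := fun t => (n t)⁻¹ • y t with hd
    have hd_tendsto : Tendsto d atTop (nhds xhat) := by
      have heq : ∀ t : ℝ, d t = (t / n t) • xhat - (n t)⁻¹ • shiftVec ℓ := by
        intro t
        rw [hd]
        simp only [hy, smul_sub, smul_smul]
        rw [div_eq_inv_mul]
      have h1 : Tendsto (fun t => (t / n t) • xhat) atTop (nhds ((1:ℝ) • xhat)) :=
        hratio'.smul_const xhat
      have h2 : Tendsto (fun t => (n t)⁻¹ • shiftVec ℓ) atTop (nhds ((0:ℝ) • shiftVec ℓ)) :=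
        hn_top.inv_tendsto_atTop.smul_const (shiftVec ℓ)
      have h := h1.sub h2
      simp only [one_smul, zero_smul, sub_zero] at h
      exact h.congr fun t => (heq t).symm
    have hd_mem : ∀ᶠ t in atTop, d t ∈ upperHalfCircle := by
      filter_upwards [eventually_ge_atTop (|ℓ| + 1)] with t ht
      have ht0 : (0:ℝ) < t := lt_of_lt_of_le (by positivity) ht
      have hnt := hnpos t ht
      constructor
      · show ‖d t‖ = 1
        rw [hd]
        simp only
        rw [norm_smul, Real.norm_eq_abs, abs_inv, abs_of_pos hnt]
        exact inv_mul_cancel₀ (ne_of_gt hnt)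
      · show d t 1 > 0
        have h : d t 1 = (n t)⁻¹ * (t * xhat 1) := by
          rw [hd]; simp [hy1]
        rw [h]
        positivity
    have hdir_us : Tendsto (fun t => uInf (d t)) atTop (nhds (uInf xhat)) := by
      have hcw : ContinuousWithinAt uInf upperHalfCircle xhat := hcont xhat ⟨hnorm, hpos⟩
      exact hcw.tendsto.comp (tendsto_nhdsWithin_iff.2 ⟨hd_tendsto, hd_mem⟩)
    -- the far-field remainder along y t
    have hh : Tendsto
        (fun t => (Real.sqrt (n t) : ℂ) * Complex.exp (-(I * k * (n t))) * us (y t))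
        atTop (nhds (uInf xhat)) := by
      have h0 : Tendsto
          (fun t => (Real.sqrt (n t) : ℂ) * Complex.exp (-(I * k * (n t))) * us (y t)
            - uInf (d t)) atTop (nhds 0) := by
        apply tendsto_of_norm_bound (g := fun t => C / (t - |ℓ|))
          (tendsto_const_nhds.div_atTop (tendsto_atTop_add_const_right _ (-|ℓ|) tendsto_id))
        filter_upwards [eventually_ge_atTop (max (R + |ℓ|) (|ℓ| + 1))] with t ht
        have ht1 : |ℓ| + 1 ≤ t := le_trans (le_max_right _ _) ht
        have ht2 : R + |ℓ| ≤ t := le_trans (le_max_left _ _) ht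
        have ht0 : (0:ℝ) < t := lt_of_lt_of_le (by positivity) ht1
        have hnt := hnpos t ht1
        have hlow := hnlow t ht0.le
        have hy1pos : y t 1 > 0 := by rw [hy1]; positivity
        have hnR : ‖y t‖ ≥ R := by
          rw [← hnyt]; linarith
        have hb := (hfar (y t) hy1pos hnR).1
        rw [sub_zero]
        rw [← hnyt] at hb
        refine le_trans hb ?_
        gcongr
        linarith
      have h := h0.add hdir_us
      rw [zero_add] at h
      exact h.congr fun t => by ring
    -- two limits of f
    have hA : Tendsto (fun t : ℝ =>
        (Real.sqrt t : ℂ) * Complex.exp (-(I * k * t)) * usl (t • xhat))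
        atTop (nhds (uInfl xhat)) := by
      apply tendsto_of_norm_bound (g := fun t => C / t)
        (tendsto_const_nhds.div_atTop tendsto_id)
      filter_upwards [eventually_ge_atTop (max R 1)] with t ht
      have ht1 : (1:ℝ) ≤ t := le_trans (le_max_right _ _) ht
      have ht0 : (0:ℝ) < t := by linarith
      have h1 : ‖t • xhat‖ = t := hsmulnorm t ht0.le
      have hmem : (t • xhat) 1 > 0 := by
        have h : (t • xhat) 1 = t * xhat 1 := rfl
        rw [h]; positivity
      have hb := (hfar (t • xhat) hmem (by rw [h1]; exact le_trans (le_max_left _ _) ht)).2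
      rw [h1] at hb
      have h3 : (t:ℝ)⁻¹ • (t • xhat) = xhat := by
        rw [smul_smul, inv_mul_cancel₀ (ne_of_gt ht0), one_smul]
      rw [h3] at hb
      exact hb
    have hB : Tendsto (fun t : ℝ =>
        (Real.sqrt t : ℂ) * Complex.exp (-(I * k * t)) * usl (t • xhat)) atTop
        (nhds (Complex.exp (I * k * ℓ * (Real.sin θ - xhat 0)) * uInf xhat)) := by
      have hφ : Continuous fun r : ℝ => Complex.exp (I * k * r) :=
        Complex.continuous_exp.comp (continuous_const.mul Complex.continuous_ofReal)
      have hexp_lim : Tendsto (fun t => Complex.exp (I * k * ((n t - t : ℝ) : ℂ))) atTop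
          (nhds (Complex.exp (I * k * ((-(ℓ * xhat 0) : ℝ) : ℂ)))) :=
        (hφ.tendsto _).comp hdiff
      have hsqrt' : Tendsto (fun t => ((Real.sqrt t / Real.sqrt (n t) : ℝ) : ℂ)) atTop
          (nhds ((1:ℝ) : ℂ)) :=
        (Complex.continuous_ofReal.tendsto _).comp hsqrt
      have hF : Tendsto (fun t =>
          Complex.exp (I * k * ℓ * Real.sin θ)
            * ((Real.sqrt t / Real.sqrt (n t) : ℝ) : ℂ)
            * Complex.exp (I * k * ((n t - t : ℝ) : ℂ))
            * ((Real.sqrt (n t) : ℂ) * Complex.exp (-(I * k * (n t))) * us (y t)))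
          atTop (nhds (Complex.exp (I * k * ℓ * Real.sin θ) * ((1:ℝ) : ℂ)
            * Complex.exp (I * k * ((-(ℓ * xhat 0) : ℝ) : ℂ)) * uInf xhat)) :=
        ((tendsto_const_nhds.mul hsqrt').mul hexp_lim).mul hh
      have hLeq : Complex.exp (I * k * ℓ * Real.sin θ) * ((1:ℝ) : ℂ)
            * Complex.exp (I * k * ((-(ℓ * xhat 0) : ℝ) : ℂ)) * uInf xhat
          = Complex.exp (I * k * ℓ * (Real.sin θ - xhat 0)) * uInf xhat := by
        have he : Complex.exp (I * k * ℓ * Real.sin θ)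
            * Complex.exp (I * k * ((-(ℓ * xhat 0) : ℝ) : ℂ))
            = Complex.exp (I * k * ℓ * (Real.sin θ - xhat 0)) := by
          rw [← Complex.exp_add]
          congr 1
          push_cast
          ring
        rw [ofReal_one, mul_one, he]
      rw [hLeq] at hF
      apply hF.congr' ?_
      filter_upwards [eventually_ge_atTop (|ℓ| + 1)] with t ht
      have ht0 : (0:ℝ) < t := lt_of_lt_of_le (by positivity) ht
      have hnt := hnpos t ht
      have hy1pos : y t 1 > 0 := by rw [hy1]; positivity
      have htr : usl (t • xhat) = Complex.exp (I * k * ℓ * Real.sin θ) * us (y t) := by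
        have h := htrans (y t) hy1pos
        have h2 : y t + shiftVec ℓ = t • xhat := by
          rw [hy]; simp
        rw [h2] at h
        exact h
      have hsq2 : ((Real.sqrt t / Real.sqrt (n t) : ℝ) : ℂ) * (Real.sqrt (n t) : ℂ)
          = (Real.sqrt t : ℂ) := by
        have hne : Real.sqrt (n t) ≠ 0 := ne_of_gt (Real.sqrt_pos.2 hnt)
        push_cast
        exact div_mul_cancel₀ _ (by exact_mod_cast hne)
      have hexp2 : Complex.exp (I * k * ((n t - t : ℝ) : ℂ))
          * Complex.exp (-(I * k * (n t))) = Complex.exp (-(I * k * t)) := by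
        rw [← Complex.exp_add]
        congr 1
        push_cast
        ring
      calc Complex.exp (I * k * ℓ * Real.sin θ)
            * ((Real.sqrt t / Real.sqrt (n t) : ℝ) : ℂ)
            * Complex.exp (I * k * ((n t - t : ℝ) : ℂ))
            * ((Real.sqrt (n t) : ℂ) * Complex.exp (-(I * k * (n t))) * us (y t))
          = Complex.exp (I * k * ℓ * Real.sin θ) * us (y t)
            * (((Real.sqrt t / Real.sqrt (n t) : ℝ) : ℂ) * (Real.sqrt (n t) : ℂ))
            * (Complex.exp (I * k * ((n t - t : ℝ) : ℂ))
              * Complex.exp (-(I * k * (n t)))) := by ring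
        _ = Complex.exp (I * k * ℓ * Real.sin θ) * us (y t)
            * (Real.sqrt t : ℂ) * Complex.exp (-(I * k * t)) := by rw [hsq2, hexp2]
        _ = (Real.sqrt t : ℂ) * Complex.exp (-(I * k * t)) * usl (t • xhat) := by
            rw [htr]; ring
    exact tendsto_nhds_unique hA hB
  refine ⟨key, ?_⟩
  rw [key, norm_mul]
  have h1 : ‖Complex.exp (I * k * ℓ * (Real.sin θ - xhat 0))‖ = 1 := by
    rw [Complex.norm_exp]
    norm_num [mul_re, mul_im]
  rw [h1, one_mul]
end

section
/- Let k > 0, let θ₁, θ₂ ∈ (−π/2, π/2) with θ₁ ≠ θ₂, let n ∈ ℤ, and set ℓ = 2πn / (k (sin θ₁ − sin θ₂)). Then for all complex numbers v₁, v₂ and every t ∈ ℝ, one has | e^{ikℓ(sin θ₁ − t)} v₁ + e^{ikℓ(sin θ₂ − t)} v₂ | = | v₁ + v₂ |. -/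
open Complex

/-- For the distinguished shifts `ℓ = 2πn/(k(sin θ₁ - sin θ₂))`, the modulus of
`e^{ikℓ(sin θ₁ - t)} v₁ + e^{ikℓ(sin θ₂ - t)} v₂` equals `|v₁ + v₂|` for all `v₁, v₂ ∈ ℂ`
and all `t ∈ ℝ` (sufficiency part of the translation-invariance theorem). -/
theorem phaseless_invariance_for_distinguished_shifts (k θ₁ θ₂ : ℝ) (hk : 0 < k)
    (hθ₁ : θ₁ ∈ Set.Ioo (-(Real.pi / 2)) (Real.pi / 2))
    (hθ₂ : θ₂ ∈ Set.Ioo (-(Real.pi / 2)) (Real.pi / 2))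
    (hne : θ₁ ≠ θ₂) (n : ℤ) (ℓ : ℝ)
    (hℓ : ℓ = 2 * Real.pi * n / (k * (Real.sin θ₁ - Real.sin θ₂))) :
    ∀ (v₁ v₂ : ℂ) (t : ℝ),
      ‖Complex.exp (I * k * ℓ * (Real.sin θ₁ - t)) * v₁ +
          Complex.exp (I * k * ℓ * (Real.sin θ₂ - t)) * v₂‖ =
        ‖v₁ + v₂‖ := by
  intro v₁ v₂ t
  have hsne : Real.sin θ₁ ≠ Real.sin θ₂ := by
    intro h
    exact hne (Real.injOn_sin
      (Set.mem_Icc_of_Ioo hθ₁) (Set.mem_Icc_of_Ioo hθ₂) h)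
  have hsub : Real.sin θ₁ - Real.sin θ₂ ≠ 0 := sub_ne_zero.mpr hsne
  have hkl : k * ℓ * (Real.sin θ₁ - Real.sin θ₂) = 2 * Real.pi * n := by
    rw [hℓ]; field_simp
  have hc : (k : ℂ) * (ℓ : ℂ) * ((Real.sin θ₁ : ℂ) - (Real.sin θ₂ : ℂ))
      = 2 * (Real.pi : ℂ) * (n : ℂ) := by exact_mod_cast hkl
  have e1 : Complex.exp (I * k * ℓ * (Real.sin θ₁ - t))
      = Complex.exp (I * k * ℓ * (Real.sin θ₂ - t)) := by
    have : (I * k * ℓ * ((Real.sin θ₁ : ℂ) - t))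
        = I * k * ℓ * ((Real.sin θ₂ : ℂ) - t) + (n : ℂ) * (2 * (Real.pi : ℂ) * I) := by
      linear_combination I * hc
    rw [this, Complex.exp_add, Complex.exp_int_mul_two_pi_mul_I, mul_one]
  rw [e1, ← mul_add, norm_mul]
  have : ‖Complex.exp (I * k * ℓ * (Real.sin θ₂ - t))‖ = 1 := by
    rw [Complex.norm_exp]
    simp
  rw [this, one_mul]
end

section
/- Let k > 0, let θ₁, θ₂ ∈ (−π/2, π/2) with θ₁ ≠ θ₂, and set Δ = sin θ₁ − sin θ₂. Let 𝕊¹₊ := {x̂ = (x̂₁, x̂₂) ∈ ℝ² : |x̂| = 1, x̂₂ > 0} and let v₁, v₂ : 𝕊¹₊ → ℂ be functions such that v₁(x̂₀) · conj(v₂(x̂₀)) ≠ 0 for some x̂₀ ∈ 𝕊¹₊. Then there exists τ ∈ [0, 2π) such that every ℓ ∈ ℝ satisfying | e^{ikℓ(sin θ₁ − x̂₁)} v₁(x̂) + e^{ikℓ(sin θ₂ − x̂₁)} v₂(x̂) | = | v₁(x̂) + v₂(x̂) | for all x̂ ∈ 𝕊¹₊ must be of the form ℓ = 2πn/(kΔ)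 or ℓ = (2πn + τ)/(kΔ) for some n ∈ ℤ. -/
open Complex

lemma key_re_eq (a b v w : ℂ) (ha : ‖a‖ = 1) (hb : ‖b‖ = 1)
    (h : ‖a * v + b * w‖ = ‖v + w‖) :
    ((a * (starRingEnd ℂ) b) * (v * (starRingEnd ℂ) w)).re = (v * (starRingEnd ℂ) w).re := by
  have hna : Complex.normSq a = 1 := by rw [← Complex.sq_norm, ha]; norm_num
  have hnb : Complex.normSq b = 1 := by rw [← Complex.sq_norm, hb]; norm_num
  have h2 : Complex.normSq (a * v + b * w) = Complex.normSq (v + w) := by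
    rw [← Complex.sq_norm, ← Complex.sq_norm, h]
  rw [Complex.normSq_add, Complex.normSq_add, Complex.normSq_mul, Complex.normSq_mul,
    hna, hnb, one_mul, one_mul] at h2
  have : (a * v * (starRingEnd ℂ) (b * w)).re = (v * (starRingEnd ℂ) w).re := by linarith
  rw [← this]
  congr 1
  rw [map_mul]
  ring

/-- Structure of the shifts leaving the phaseless far-field pattern of a superposition of
two plane waves invariant: if `v₁(x̂₀) conj(v₂(x̂₀)) ≠ 0` for some `x̂₀` on the open upper
half circle, then there is `τ ∈ [0, 2π)` such that every shift `ℓ` satisfying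
`|e^{ikℓ(sin θ₁ - x̂₁)} v₁(x̂) + e^{ikℓ(sin θ₂ - x̂₁)} v₂(x̂)| = |v₁(x̂) + v₂(x̂)|` for all
`x̂` on the upper half circle is of the form `ℓ = 2πn/(kΔ)` or `ℓ = (2πn + τ)/(kΔ)` with
`n ∈ ℤ`, where `Δ = sin θ₁ - sin θ₂`. -/
theorem phaseless_invariance_shift_structure (k θ₁ θ₂ : ℝ) (hk : 0 < k)
    (hθ₁ : θ₁ ∈ Set.Ioo (-(Real.pi / 2)) (Real.pi / 2))
    (hθ₂ : θ₂ ∈ Set.Ioo (-(Real.pi / 2)) (Real.pi / 2))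
    (hne : θ₁ ≠ θ₂) (Δ : ℝ) (hΔ : Δ = Real.sin θ₁ - Real.sin θ₂)
    (v₁ v₂ : EuclideanSpace ℝ (Fin 2) → ℂ)
    (hv : ∃ xhat₀ ∈ upperHalfCircle, v₁ xhat₀ * (starRingEnd ℂ) (v₂ xhat₀) ≠ 0) :
    ∃ τ ∈ Set.Ico (0 : ℝ) (2 * Real.pi),
      ∀ ℓ : ℝ,
        (∀ xhat ∈ upperHalfCircle,
          ‖Complex.exp (I * k * ℓ * (Real.sin θ₁ - xhat 0)) * v₁ xhat +
              Complex.exp (I * k * ℓ * (Real.sin θ₂ - xhat 0)) * v₂ xhat‖ =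
            ‖v₁ xhat + v₂ xhat‖) →
        (∃ n : ℤ, ℓ = 2 * Real.pi * n / (k * Δ)) ∨
        (∃ n : ℤ, ℓ = (2 * Real.pi * n + τ) / (k * Δ)) := by
  obtain ⟨x₀, hx₀, hc⟩ := hv
  have hpi : (0:ℝ) < 2 * Real.pi := by positivity
  set c : ℂ := v₁ x₀ * (starRingEnd ℂ) (v₂ x₀) with hcdef
  set φ : ℝ := c.arg with hφ
  set τ : ℝ := 2 * Real.pi * Int.fract ((-2 * φ) / (2 * Real.pi)) with hτ
  have hfract : ∃ m : ℤ, -2 * φ = 2 * Real.pi * m + τ := by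
    refine ⟨⌊(-2 * φ) / (2 * Real.pi)⌋, ?_⟩
    rw [hτ, Int.fract]
    have hπ := Real.pi_ne_zero
    field_simp
    ring
  have hΔne : Δ ≠ 0 := by
    rw [hΔ, sub_ne_zero]
    intro h
    exact hne (Real.injOn_sin ⟨le_of_lt hθ₁.1, le_of_lt hθ₁.2⟩ ⟨le_of_lt hθ₂.1, le_of_lt hθ₂.2⟩ h)
  have hkΔ : k * Δ ≠ 0 := mul_ne_zero (ne_of_gt hk) hΔne
  refine ⟨τ, ⟨?_, ?_⟩, ?_⟩
  · rw [hτ]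
    exact mul_nonneg (le_of_lt hpi) (Int.fract_nonneg _)
  · rw [hτ]
    have := Int.fract_lt_one ((-2 * φ) / (2 * Real.pi))
    nlinarith
  intro ℓ h
  have heq := h x₀ hx₀
  -- abbreviations
  have ha : ‖Complex.exp (I * k * ℓ * (Real.sin θ₁ - x₀ 0))‖ = 1 := by
    rw [Complex.norm_exp]
    norm_num [Complex.mul_re, Complex.mul_im]
  have hb : ‖Complex.exp (I * k * ℓ * (Real.sin θ₂ - x₀ 0))‖ = 1 := by
    rw [Complex.norm_exp]
    norm_num [Complex.mul_re, Complex.mul_im]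
  have hre := key_re_eq _ _ _ _ ha hb heq
  -- the product of phase factors is exp(I k ℓ Δ)
  have hphase : Complex.exp (I * k * ℓ * (Real.sin θ₁ - x₀ 0)) *
      (starRingEnd ℂ) (Complex.exp (I * k * ℓ * (Real.sin θ₂ - x₀ 0))) =
      Complex.exp ((k * ℓ * Δ : ℝ) * I) := by
    rw [← Complex.exp_conj, ← Complex.exp_add]
    congr 1
    rw [hΔ]
    simp only [map_mul, Complex.conj_I, Complex.conj_ofReal, map_sub]
    push_cast
    ring
  rw [hphase] at hre
  -- turn into cosine equation
  have hrabs : (0:ℝ) < ‖c‖ := norm_pos_iff.mpr hc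
  have hcre : c.re = ‖c‖ * Real.cos φ := by
    rw [hφ, Complex.cos_arg hc]
    field_simp
  have hcim : c.im = ‖c‖ * Real.sin φ := by
    rw [hφ, Complex.sin_arg]
    field_simp
  have hexp : (Complex.exp ((k * ℓ * Δ : ℝ) * I) * c).re =
      Real.cos (k * ℓ * Δ) * c.re - Real.sin (k * ℓ * Δ) * c.im := by
    rw [Complex.mul_re, Complex.exp_ofReal_mul_I_re, Complex.exp_ofReal_mul_I_im]
  have hcos : Real.cos (k * ℓ * Δ + φ) = Real.cos φ := by
    have hre' : (Complex.exp ((k * ℓ * Δ : ℝ) * I) * c).re = c.re := hre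
    rw [hexp, hcre, hcim] at hre'
    have habs : ‖c‖ * Real.cos (k * ℓ * Δ + φ) = ‖c‖ * Real.cos φ := by
      rw [Real.cos_add]
      linear_combination hre'
    exact mul_left_cancel₀ (ne_of_gt hrabs) habs
  rw [Real.cos_eq_cos_iff] at hcos
  obtain ⟨n, hn | hn⟩ := hcos
  · left
    refine ⟨-n, ?_⟩
    have : k * ℓ * Δ = 2 * Real.pi * (-n : ℤ) := by push_cast; linarith
    field_simp
    linarith [this]
  · right
    obtain ⟨m, hm⟩ := hfract
    refine ⟨n + m, ?_⟩
    have : k * ℓ * Δ = 2 * Real.pi * ((n : ℝ) + m) + τ := by push_cast at hm ⊢; linarith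
    field_simp
    push_cast
    linarith [this]
end

section
/- Let h : ℝ → ℝ be continuous with compact support, let k > 0 and θ ∈ (−π/2, π/2), and set d = (sin θ, −cos θ), d' = (sin θ, cos θ). If exp( i k d · (x₁, h(x₁)) ) = exp( i k d' · (x₁, h(x₁)) ) for all x₁ ∈ ℝ, then h ≡ 0. -/
open Complex
open scoped RealInnerProductSpace

/-- If `h` is continuous with compact support and the incident plane wave coincides with the
reflected wave on the whole surface `Γ = {(x₁, h(x₁))}`, i.e.
`e^{ik d·(x₁, h(x₁))} = e^{ik d'·(x₁, h(x₁))}` for all `x₁`, where `d = (sin θ, -cos θ)` and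
`d' = (sin θ, cos θ)`, then `h ≡ 0`. -/
theorem flat_surface_of_incident_eq_reflected (h : ℝ → ℝ) (hcont : Continuous h)
    (hsupp : HasCompactSupport h) (k θ : ℝ) (hk : 0 < k)
    (hθ : θ ∈ Set.Ioo (-(Real.pi / 2)) (Real.pi / 2))
    (d d' : EuclideanSpace ℝ (Fin 2))
    (hd : d = ![Real.sin θ, -Real.cos θ]) (hd' : d' = ![Real.sin θ, Real.cos θ])
    (heq : ∀ x₁ : ℝ,
      Complex.exp (I * k * (⟪d, (WithLp.toLp 2 ![x₁, h x₁] : EuclideanSpace ℝ (Fin 2))⟫ : ℝ)) =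
        Complex.exp (I * k * (⟪d', (WithLp.toLp 2 ![x₁, h x₁] : EuclideanSpace ℝ (Fin 2))⟫ : ℝ))) :
    ∀ x₁ : ℝ, h x₁ = 0 := by
  have hcθ : 0 < Real.cos θ := Real.cos_pos_of_mem_Ioo hθ
  have hπ : 0 < Real.pi := Real.pi_pos
  set c : ℝ := Real.pi / (k * Real.cos θ) with hc
  have hkc : 0 < k * Real.cos θ := mul_pos hk hcθ
  have hcpos : 0 < c := div_pos hπ hkc
  -- key: every value of h is an integer multiple of c
  have key : ∀ x : ℝ, ∃ n : ℤ, h x = c * n := by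
    intro x
    have hx := heq x
    rw [Complex.exp_eq_exp_iff_exists_int] at hx
    obtain ⟨n, hn⟩ := hx
    have ha : (inner (𝕜 := ℝ) (E := EuclideanSpace ℝ (Fin 2))
        d (WithLp.toLp 2 ![x, h x]))
        = Real.sin θ * x - Real.cos θ * h x := by
      simp [PiLp.inner_apply, Fin.sum_univ_two, hd]; try ring
    have hb : (inner (𝕜 := ℝ) (E := EuclideanSpace ℝ (Fin 2))
        d' (WithLp.toLp 2 ![x, h x]))
        = Real.sin θ * x + Real.cos θ * h x := by
      simp [PiLp.inner_apply, Fin.sum_univ_two, hd']; try ring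
    rw [ha, hb] at hn
    have h2 : (I : ℂ) * ((k : ℂ) * ((Real.sin θ * x - Real.cos θ * h x : ℝ) : ℂ))
        = I * ((k : ℂ) * ((Real.sin θ * x + Real.cos θ * h x : ℝ) : ℂ)
            + (n : ℂ) * (2 * (Real.pi : ℂ))) := by
      linear_combination hn
    have h3 := mul_left_cancel₀ I_ne_zero h2
    have h4 : k * (Real.sin θ * x - Real.cos θ * h x)
        = k * (Real.sin θ * x + Real.cos θ * h x) + n * (2 * Real.pi) := by
      exact_mod_cast h3
    refine ⟨-n, ?_⟩
    push_cast
    rw [hc, div_mul_eq_mul_div, eq_div_iff (ne_of_gt hkc)]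
    linear_combination (-1/2 : ℝ) * h4
  -- no value of h equals ±c/2
  have nohalf : ∀ y : ℝ, h y ≠ c / 2 ∧ h y ≠ -(c / 2) := by
    intro y
    obtain ⟨n, hn⟩ := key y
    constructor
    · intro hy
      rw [hy] at hn
      have h1 : c * (2 * n) = c * 1 := by linarith
      have h2 : (2 : ℝ) * n = 1 := by
        have := mul_left_cancel₀ (ne_of_gt hcpos) h1
        linarith
      have : (2 : ℤ) * n = 1 := by exact_mod_cast h2
      omega
    · intro hy
      rw [hy] at hn
      have h1 : c * (2 * n) = c * (-1) := by linarith
      have h2 : (2 : ℝ) * n = -1 := by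
        have := mul_left_cancel₀ (ne_of_gt hcpos) h1
        linarith
      have : (2 : ℤ) * n = -1 := by exact_mod_cast h2
      omega
  -- h vanishes at infinity
  obtain ⟨R, hRpos, hR⟩ := hsupp.exists_pos_le_norm
  intro x
  by_contra hx
  obtain ⟨n, hn⟩ := key x
  have hn0 : n ≠ 0 := by rintro rfl; simp at hn; exact hx hn
  set R' : ℝ := max R (|x| + 1) with hR'
  have hxR' : x ≤ R' := le_trans (le_trans (le_abs_self x) (by linarith)) (le_max_right _ _)
  have hRzero : h R' = 0 := by
    apply hR
    have hRR : R ≤ R' := le_max_left _ _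
    simpa [abs_of_pos (lt_of_lt_of_le hRpos hRR)] using hRR
  rcases lt_or_gt_of_ne hx with hneg | hpos
  · have hle : h x ≤ -c := by
      have hn1 : (n : ℝ) ≤ -1 := by
        have : n ≤ -1 := by
          rcases lt_or_gt_of_ne hn0 with h' | h'
          · omega
          · exfalso
            have : (1:ℝ) ≤ n := by exact_mod_cast h'
            nlinarith
        exact_mod_cast this
      nlinarith
    have hmem : -(c/2) ∈ Set.Icc (h x) (h R') := ⟨by linarith, by rw [hRzero]; linarith⟩
    obtain ⟨y, _, hy⟩ := intermediate_value_Icc hxR' hcont.continuousOn hmem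
    exact (nohalf y).2 hy
  · have hge : c ≤ h x := by
      have hn1 : (1:ℝ) ≤ n := by
        have : 1 ≤ n := by
          rcases lt_or_gt_of_ne hn0 with h' | h'
          · exfalso
            have : (n:ℝ) ≤ -1 := by exact_mod_cast (by omega : n ≤ -1)
            nlinarith
          · exact h'
        exact_mod_cast this
      nlinarith
    have hmem : c/2 ∈ Set.Icc (h R') (h x) := ⟨by rw [hRzero]; linarith, by linarith⟩
    obtain ⟨y, _, hy⟩ := intermediate_value_Icc' hxR' hcont.continuousOn hmem
    exact (nohalf y).1 hy
end
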